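/- Let $k$ be a field, $\Gamma$ a group, and $H = A *_\sigma \Gamma$ a crossed product that is a $\Gamma$-graded algebra with an invertible element $u_g = 1 * g$ in each component $g$. If $I \subseteq A$ is an ideal of the neutral component stable under the weak action (i.e., $u_g I u_g^{-1} \subseteq I$ for all $g \in \Gamma$) and $I$ is nilpotent in $A$, then $I *_\sigma \Gamma := I \otimes k[\Gamma] \subseteq H$ is a nilpotent two-sided ideal of $H$, and $H/(I *_\sigma \Gamma)$ is again a crossed product $(A/I) *_{\bar\sigma} \Gamma$. -/

import Mathlib

/-- The multiplication of the crossed product `A *_σ Γ`, realized on the function space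
`Γ → A` (which is `A ⊗ k[Γ]` for finite `Γ`): `(a * g)(c * h) = a (g⋅c) σ(g,h) * gh`. -/
noncomputable def crossedMul {k A Γ : Type*} [Field k] [Ring A] [Algebra k A]
    [Group Γ] [Fintype Γ] (φ : Γ → (A →ₐ[k] A)) (σ : Γ → Γ → Aˣ)
    (f g : Γ → A) : Γ → A :=
  fun x => ∑ y : Γ, f y * φ y (g (y⁻¹ * x)) * (σ y (y⁻¹ * x) : A)

/-- The unit of the crossed product `A *_σ Γ` on the function space model. -/
noncomputable def crossedOne {k A Γ : Type*} [Field k] [Ring A] [Algebra k A]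
    [Group Γ] [DecidableEq Γ] : Γ → A :=
  fun x => if x = 1 then 1 else 0

/-- Powers of an ideal coming from a two-sided ideal absorb right multiplication. -/
lemma pow_mul_right_mem {A : Type*} [Ring A] (I : TwoSidedIdeal A) :
    ∀ (n : ℕ) (a : A), a ∈ I.asIdeal ^ n → ∀ b : A, a * b ∈ I.asIdeal ^ n := by
  intro n
  induction n with
  | zero =>
    intro a _ b
    rw [Submodule.pow_zero, Ideal.one_eq_top]
    trivial
  | succ n ih =>
    intro a ha b
    rw [Submodule.pow_succ] at ha ⊢
    refine Submodule.mul_induction_on ha (fun m hm x hx => ?_) (fun x y hx hy => ?_)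
    · rw [mul_assoc]
      exact Ideal.mul_mem_mul hm (I.mul_mem_right _ _ hx)
    · rw [add_mul]; exact add_mem hx hy

/-- Left multiplication by an element of `I` raises the power by one. -/
lemma pow_mul_left_mem {A : Type*} [Ring A] (I : TwoSidedIdeal A) :
    ∀ (n : ℕ) (a : A), a ∈ I.asIdeal ^ n → ∀ b ∈ I, b * a ∈ I.asIdeal ^ (n + 1) := by
  intro n
  induction n with
  | zero =>
    intro a _ b hb
    rw [zero_add, Submodule.pow_one]
    exact I.mul_mem_right _ _ hb
  | succ n ih =>
    intro a ha b hb
    rw [Submodule.pow_succ] at ha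
    rw [Submodule.pow_succ]
    refine Submodule.mul_induction_on ha (fun m hm x hx => ?_) (fun x y hx hy => ?_)
    · rw [← mul_assoc]
      exact Ideal.mul_mem_mul (ih m hm b hb) hx
    · rw [mul_add]; exact add_mem hx hy

/-- A ring endomorphism preserving `I` preserves its powers. -/
lemma pow_map_mem {A : Type*} [Ring A] (I : TwoSidedIdeal A) (f : A →+* A)
    (hf : ∀ x ∈ I, f x ∈ I) :
    ∀ (n : ℕ) (a : A), a ∈ I.asIdeal ^ n → f a ∈ I.asIdeal ^ n := by
  intro n
  induction n with
  | zero =>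
    intro a _
    rw [Submodule.pow_zero, Ideal.one_eq_top]
    trivial
  | succ n ih =>
    intro a ha
    rw [Submodule.pow_succ] at ha ⊢
    refine Submodule.mul_induction_on ha (fun m hm x hx => ?_) (fun x y hx hy => ?_)
    · rw [map_mul]
      exact Ideal.mul_mem_mul (ih m hm) (hf x hx)
    · rw [map_add]; exact add_mem hx hy

/-- Lift of a ring endomorphism preserving the congruence to the quotient. -/
def barHom {A : Type*} [Ring A] (c : RingCon A) (f : A →+* A)
    (hf : ∀ a b, c a b → c (f a) (f b)) : c.Quotient →+* c.Quotient where
  toFun := Quotient.map' f (fun a b hab => hf a b hab)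
  map_one' := congrArg (Quotient.mk'' ·) (map_one f)
  map_mul' := by
    rintro ⟨a⟩ ⟨b⟩
    exact congrArg (Quotient.mk'' ·) (map_mul f a b)
  map_zero' := congrArg (Quotient.mk'' ·) (map_zero f)
  map_add' := by
    rintro ⟨a⟩ ⟨b⟩
    exact congrArg (Quotient.mk'' ·) (map_add f a b)

theorem stmt_19 {k A Γ : Type*} [Field k] [Ring A] [Algebra k A]
    [FiniteDimensional k A] [Group Γ] [Fintype Γ] [DecidableEq Γ]
    -- the weak action of `Γ` on `A` (each group element acts by an algebra endomorphism)
    (φ : Γ → (A →ₐ[k] A)) (hφ1 : φ 1 = AlgHom.id k A)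
    -- the convolution invertible normalized `2`-cocycle
    (σ : Γ → Γ → Aˣ)
    (hσnorm : ∀ g, σ g 1 = 1 ∧ σ 1 g = 1)
    (hcoc : ∀ g h l : Γ, φ g (σ h l) * (σ g (h * l) : A) = (σ g h : A) * (σ (g * h) l : A))
    (htwist : ∀ (g h : Γ) (a : A), φ g (φ h a) * (σ g h : A) = (σ g h : A) * φ (g * h) a)
    -- `I` is a nilpotent two-sided ideal of the neutral component `A`,
    -- stable under the weak action
    (I : TwoSidedIdeal A) (N0 : ℕ) (hnil : I.asIdeal ^ N0 = ⊥)
    (hstable : ∀ g : Γ, ∀ x ∈ I, φ g x ∈ I) :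
    -- (1) `I *_σ Γ = {f : Γ → A | ∀ x, f x ∈ I}` is a two-sided ideal of `A *_σ Γ`
    ((∀ f g : Γ → A, (∀ x, f x ∈ I) → (∀ x, g x ∈ I) → ∀ x, (f + g) x ∈ I) ∧
      ∀ f : Γ → A, (∀ x, f x ∈ I) → ∀ h : Γ → A,
        (∀ x, crossedMul φ σ h f x ∈ I) ∧ (∀ x, crossedMul φ σ f h x ∈ I)) ∧
    -- (2) `I *_σ Γ` is nilpotent
    (∃ N : ℕ, ∀ fs : List (Γ → A), fs.length = N → (∀ f ∈ fs, ∀ x, f x ∈ I) →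
      fs.foldr (crossedMul φ σ) (crossedOne (k := k)) = 0) ∧
    -- (3) the quotient `(A *_σ Γ)/(I *_σ Γ)` is again the crossed product
    -- `(A/I) *_σ̄ Γ`, for the induced weak action and cocycle on `A/I`:
    -- the componentwise quotient map intertwines `crossedMul` with the
    -- crossed-product multiplication of the induced data
    (∃ (φbar : Γ → (I.ringCon.Quotient →+* I.ringCon.Quotient))
       (σbar : Γ → Γ → (I.ringCon.Quotient)ˣ),
      (∀ (g : Γ) (a : A), φbar g (I.ringCon.mk' a) = I.ringCon.mk' (φ g a)) ∧
      (∀ g h : Γ, (σbar g h : I.ringCon.Quotient) = I.ringCon.mk' (σ g h)) ∧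
      (∀ f f' : Γ → A, ∀ x : Γ,
        I.ringCon.mk' (crossedMul φ σ f f' x) =
          ∑ y : Γ, I.ringCon.mk' (f y) * φbar y (I.ringCon.mk' (f' (y⁻¹ * x))) *
            (σbar y (y⁻¹ * x) : I.ringCon.Quotient))) := by
  refine ⟨⟨fun f g hf hg x => I.add_mem (hf x) (hg x), fun f hf h => ⟨fun x => ?_, fun x => ?_⟩⟩,
    ⟨N0, ?_⟩, ?_⟩
  · exact I.finsetSum_mem _ _ fun y _ =>
      I.mul_mem_right _ _ (I.mul_mem_left _ _ (hstable _ _ (hf _)))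
  · exact I.finsetSum_mem _ _ fun y _ =>
      I.mul_mem_right _ _ (I.mul_mem_right _ _ (hf y))
  · -- nilpotency
    have key : ∀ fs : List (Γ → A), (∀ f ∈ fs, ∀ x, f x ∈ I) →
        ∀ x, fs.foldr (crossedMul φ σ) (crossedOne (k := k)) x ∈ I.asIdeal ^ fs.length := by
      intro fs
      induction fs with
      | nil =>
        intro _ x
        rw [List.length_nil, Submodule.pow_zero, Ideal.one_eq_top]
        trivial
      | cons f fs ih =>
        intro hmem x
        have hf : ∀ x, f x ∈ I := hmem f List.mem_cons_self
        have hrest := ih (fun g hg => hmem g (List.mem_cons_of_mem f hg))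
        show crossedMul φ σ f _ x ∈ I.asIdeal ^ (fs.length + 1)
        refine Submodule.sum_mem _ fun y _ => ?_
        refine pow_mul_right_mem I _ _ ?_ _
        exact pow_mul_left_mem I _ _
          (pow_map_mem I (φ y).toRingHom (hstable y) _ _ (hrest _)) _ (hf y)
    intro fs hlen hmem
    funext x
    have := key fs hmem x
    rw [hlen, hnil] at this
    simpa using this
  · -- the quotient crossed product
    have hcong : ∀ (g : Γ) (a b : A), I.ringCon a b →
        I.ringCon ((φ g).toRingHom a) ((φ g).toRingHom b) := by
      intro g a b hab
      rw [I.rel_iff] at hab ⊢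
      simpa [map_sub] using hstable g _ hab
    refine ⟨fun g => barHom I.ringCon (φ g).toRingHom (hcong g),
      fun g h => Units.map (I.ringCon.mk' : A →* I.ringCon.Quotient) (σ g h),
      fun g a => rfl, fun g h => rfl, fun f f' x => ?_⟩
    rw [crossedMul, map_sum]
    refine Finset.sum_congr rfl fun y _ => ?_
    rw [map_mul, map_mul]
    rfl
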